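/- arXiv:0908.2964 — 7 statements merged into one kernel-verified Lean document; each statement's English description precedes it below -/
import Mathlib

section
/- The function F_N is jointly concave: for density matrices ρ₁, ρ₂, σ₁, σ₂ and p₁, p₂ ≥ 0 with p₁ + p₂ = 1, one has F_N(p₁ρ₁ + p₂ρ₂, p₁σ₁ + p₂σ₂) ≥ p₁·F_N(ρ₁,σ₁) + p₂·F_N(ρ₂,σ₂). -/
open Matrix BigOperators ComplexOrder

/-- A density matrix: positive semidefinite with unit trace. -/
def IsDensity {n : Type*} [Fintype n] (ρ : Matrix n n ℂ) : Prop :=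
  ρ.PosSemidef ∧ ρ.trace = 1

/-- The alternative fidelity `F_N(ρ,σ) = tr(ρσ) + √(1 - tr ρ²)·√(1 - tr σ²)`. -/
noncomputable def FN {n : Type*} [Fintype n] (ρ σ : Matrix n n ℂ) : ℝ :=
  (ρ * σ).trace.re
    + Real.sqrt (1 - (ρ * ρ).trace.re) * Real.sqrt (1 - (σ * σ).trace.re)


noncomputable def Tr' {n : Type*} [Fintype n] (A B : Matrix n n ℂ) : ℝ := ((A * B).trace).re

lemma Tr'_comm {n : Type*} [Fintype n] (A B : Matrix n n ℂ) : Tr' A B = Tr' B A := by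
  rw [Tr', Tr', Matrix.trace_mul_comm]

lemma Tr'_expand {n : Type*} [Fintype n] (a b c d : ℝ) (A B C D : Matrix n n ℂ) :
    Tr' ((a:ℂ)•A + (b:ℂ)•B) ((c:ℂ)•C + (d:ℂ)•D)
      = a*c*Tr' A C + a*d*Tr' A D + b*c*Tr' B C + b*d*Tr' B D := by
  simp only [Tr', Matrix.add_mul, Matrix.mul_add, Matrix.smul_mul, Matrix.mul_smul,
    Matrix.trace_add, smul_smul, Matrix.trace_smul, smul_eq_mul]
  simp only [Complex.add_re, Complex.mul_re, Complex.mul_im, Complex.ofReal_re,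
    Complex.ofReal_im]
  ring

lemma Tr'_sub_sub {n : Type*} [Fintype n] (A B C D : Matrix n n ℂ) :
    Tr' (A - B) (C - D) = Tr' A C - Tr' A D - Tr' B C + Tr' B D := by
  have h := Tr'_expand 1 (-1) 1 (-1) A B C D
  simp only [Complex.ofReal_one, Complex.ofReal_neg, one_smul, neg_one_smul,
    ← sub_eq_add_neg] at h
  rw [h]; ring

lemma Tr'_self_nonneg {n : Type*} [Fintype n] {A : Matrix n n ℂ} (hA : A.IsHermitian) :
    0 ≤ Tr' A A := by
  have h : ∀ i j, A j i = (starRingEnd ℂ) (A i j) := by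
    intro i j
    calc A j i = Aᴴ j i := by rw [hA]
    _ = (starRingEnd ℂ) (A i j) := rfl
  rw [Tr', Matrix.trace]
  simp only [Matrix.diag, Matrix.mul_apply]
  rw [Complex.re_sum]
  apply Finset.sum_nonneg
  intro i _
  rw [Complex.re_sum]
  apply Finset.sum_nonneg
  intro j _
  rw [h i j, Complex.mul_conj]
  simp [Complex.normSq_nonneg]


lemma conj_trace_eq' {n : Type*} [Fintype n] [DecidableEq n] (U D : Matrix n n ℂ) (hUU : star U * U = 1) :
    (U * D * star U).trace = D.trace := by
  rw [Matrix.trace_mul_cycle, hUU, Matrix.one_mul]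

lemma conj_mul_conj' {n : Type*} [Fintype n] [DecidableEq n] (U A B : Matrix n n ℂ) (hUU : star U * U = 1) :
    (U * A * star U) * (U * B * star U) = U * (A * B) * star U := by
  simp only [Matrix.mul_assoc]
  rw [← Matrix.mul_assoc (star U) U (B * star U), hUU, Matrix.one_mul]

lemma trace_sq_le_one' {n : Type*} [Fintype n] [DecidableEq n] {ρ : Matrix n n ℂ}
    (hpsd : ρ.PosSemidef) (htr : ρ.trace = 1) : Tr' ρ ρ ≤ 1 := by
  have hH : ρ.IsHermitian := hpsd.1
  have key : ∀ (V D : Matrix n n ℂ), ρ = V * D * star V →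
      star V * V = 1 →
      ρ.trace = D.trace ∧ (ρ * ρ).trace = (D * D).trace := by
    intro V D h1 h2
    constructor
    · rw [h1, conj_trace_eq' _ _ h2]
    · rw [h1, conj_mul_conj' _ _ _ h2, conj_trace_eq' _ _ h2]
  obtain ⟨k1, k2⟩ := key _ _ hH.spectral_theorem
    (Matrix.mem_unitaryGroup_iff'.mp hH.eigenvectorUnitary.2)
  have hsum : ∑ i, hH.eigenvalues i = 1 := by
    have h := congrArg Complex.re (k1.symm.trans htr)
    rw [Matrix.trace_diagonal] at h
    simpa [Complex.re_sum] using h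
  have htr2 : Tr' ρ ρ = ∑ i, (hH.eigenvalues i)^2 := by
    rw [Tr', k2, Matrix.diagonal_mul_diagonal, Matrix.trace_diagonal]
    simp [Complex.re_sum, pow_two, Pi.mul_apply]
  rw [htr2, ← one_pow 2, ← hsum]
  exact Finset.sum_sq_le_sq_sum_of_nonneg (fun i _ => hpsd.eigenvalues_nonneg i)

lemma cs_aux' {α β γ : ℝ} (hα : 0 ≤ α) (hγ : 0 ≤ γ)
    (h : ∀ t : ℝ, 0 ≤ α * (t*t) + (2*β) * t + γ) : β ≤ Real.sqrt α * Real.sqrt γ := by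
  have hd := discrim_le_zero h
  rw [discrim] at hd
  have hb : β^2 ≤ α*γ := by nlinarith
  calc β ≤ |β| := le_abs_self β
    _ = Real.sqrt (β^2) := (Real.sqrt_sq_eq_abs β).symm
    _ ≤ Real.sqrt (α*γ) := Real.sqrt_le_sqrt hb
    _ = _ := Real.sqrt_mul hα γ

lemma two_dim_cs' {a b c d : ℝ} (ha : 0 ≤ a) (hb : 0 ≤ b) (hc : 0 ≤ c) (hd : 0 ≤ d) :
    a*b + c*d ≤ Real.sqrt (a^2+c^2) * Real.sqrt (b^2+d^2) := by
  have h1 : (a*b+c*d)^2 ≤ (a^2+c^2)*(b^2+d^2) := by nlinarith [sq_nonneg (a*d - b*c)]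
  calc a*b+c*d = Real.sqrt ((a*b+c*d)^2) := (Real.sqrt_sq (by positivity)).symm
    _ ≤ Real.sqrt ((a^2+c^2)*(b^2+d^2)) := Real.sqrt_le_sqrt h1
    _ = _ := Real.sqrt_mul (by positivity) _

lemma cs_main' {n : Type*} [Fintype n] {A B : Matrix n n ℂ}
    (hA : A.IsHermitian) (hB : B.IsHermitian) (x y : ℝ) :
    Tr' A B + x*y ≤ Real.sqrt (Tr' A A + x^2) * Real.sqrt (Tr' B B + y^2) := by
  have hcomm : Tr' A B = Tr' B A := Tr'_comm A B
  apply cs_aux' (α := Tr' A A + x^2) (γ := Tr' B B + y^2)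
    (add_nonneg (Tr'_self_nonneg hA) (sq_nonneg x))
    (add_nonneg (Tr'_self_nonneg hB) (sq_nonneg y))
  intro t
  have hH : (B + (t:ℂ) • A).IsHermitian := by
    apply hB.add
    rw [Matrix.IsHermitian, Matrix.conjTranspose_smul, hA]
    congr 1
    simp [Complex.star_def, Complex.conj_ofReal]
  have hexp := Tr'_expand 1 t 1 t B A B A
  simp only [Complex.ofReal_one, one_smul] at hexp
  have h0 : 0 ≤ Tr' (B + (t:ℂ) • A) (B + (t:ℂ) • A) + (y + t*x)^2 :=
    add_nonneg (Tr'_self_nonneg hH) (sq_nonneg _)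
  have heq : (Tr' A A + x^2) * (t*t) + (2*(Tr' A B + x*y)) * t + (Tr' B B + y^2)
      = Tr' (B + (t:ℂ) • A) (B + (t:ℂ) • A) + (y + t*x)^2 := by
    rw [hexp, ← hcomm]; ring
  rw [heq]; exact h0


theorem stmt_1 {n : Type*} [Fintype n] [DecidableEq n]
    (ρ₁ ρ₂ σ₁ σ₂ : Matrix n n ℂ)
    (hρ₁ : IsDensity ρ₁) (hρ₂ : IsDensity ρ₂)
    (hσ₁ : IsDensity σ₁) (hσ₂ : IsDensity σ₂)
    (p₁ p₂ : ℝ) (hp₁ : 0 ≤ p₁) (hp₂ : 0 ≤ p₂) (hp : p₁ + p₂ = 1) :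
    p₁ * FN ρ₁ σ₁ + p₂ * FN ρ₂ σ₂ ≤
      FN ((p₁ : ℂ) • ρ₁ + (p₂ : ℂ) • ρ₂) ((p₁ : ℂ) • σ₁ + (p₂ : ℂ) • σ₂) := by
  have hp' : p₂ = 1 - p₁ := by linarith
  subst hp'
  have hFN : ∀ (A B : Matrix n n ℂ),
      FN A B = Tr' A B + Real.sqrt (1 - Tr' A A) * Real.sqrt (1 - Tr' B B) := fun A B => rfl
  have hΔρ : (ρ₁ - ρ₂).IsHermitian := hρ₁.1.1.sub hρ₂.1.1
  have hΔσ : (σ₁ - σ₂).IsHermitian := hσ₁.1.1.sub hσ₂.1.1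
  have hx₁0 : 0 ≤ Real.sqrt (1 - Tr' ρ₁ ρ₁) := Real.sqrt_nonneg _
  have hx₂0 : 0 ≤ Real.sqrt (1 - Tr' ρ₂ ρ₂) := Real.sqrt_nonneg _
  have hy₁0 : 0 ≤ Real.sqrt (1 - Tr' σ₁ σ₁) := Real.sqrt_nonneg _
  have hy₂0 : 0 ≤ Real.sqrt (1 - Tr' σ₂ σ₂) := Real.sqrt_nonneg _
  have hx₁ : (Real.sqrt (1 - Tr' ρ₁ ρ₁))^2 = 1 - Tr' ρ₁ ρ₁ :=
    Real.sq_sqrt (by linarith [trace_sq_le_one' hρ₁.1 hρ₁.2])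
  have hx₂ : (Real.sqrt (1 - Tr' ρ₂ ρ₂))^2 = 1 - Tr' ρ₂ ρ₂ :=
    Real.sq_sqrt (by linarith [trace_sq_le_one' hρ₂.1 hρ₂.2])
  have hy₁ : (Real.sqrt (1 - Tr' σ₁ σ₁))^2 = 1 - Tr' σ₁ σ₁ :=
    Real.sq_sqrt (by linarith [trace_sq_le_one' hσ₁.1 hσ₁.2])
  have hy₂ : (Real.sqrt (1 - Tr' σ₂ σ₂))^2 = 1 - Tr' σ₂ σ₂ :=
    Real.sq_sqrt (by linarith [trace_sq_le_one' hσ₂.1 hσ₂.2])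
  have hpp : (0:ℝ) ≤ p₁ * (1 - p₁) := mul_nonneg hp₁ hp₂
  have hE0 : 0 ≤ Tr' (ρ₁ - ρ₂) (ρ₁ - ρ₂)
      + (Real.sqrt (1 - Tr' ρ₁ ρ₁) - Real.sqrt (1 - Tr' ρ₂ ρ₂))^2 :=
    add_nonneg (Tr'_self_nonneg hΔρ) (sq_nonneg _)
  have hF0 : 0 ≤ Tr' (σ₁ - σ₂) (σ₁ - σ₂)
      + (Real.sqrt (1 - Tr' σ₁ σ₁) - Real.sqrt (1 - Tr' σ₂ σ₂))^2 :=
    add_nonneg (Tr'_self_nonneg hΔσ) (sq_nonneg _)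
  have ha0 : 0 ≤ p₁ * Real.sqrt (1 - Tr' ρ₁ ρ₁) + (1-p₁) * Real.sqrt (1 - Tr' ρ₂ ρ₂) :=
    add_nonneg (mul_nonneg hp₁ hx₁0) (mul_nonneg hp₂ hx₂0)
  have hb0 : 0 ≤ p₁ * Real.sqrt (1 - Tr' σ₁ σ₁) + (1-p₁) * Real.sqrt (1 - Tr' σ₂ σ₂) :=
    add_nonneg (mul_nonneg hp₁ hy₁0) (mul_nonneg hp₂ hy₂0)
  have hc2 : (Real.sqrt (p₁ * (1-p₁) * (Tr' (ρ₁ - ρ₂) (ρ₁ - ρ₂)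
      + (Real.sqrt (1 - Tr' ρ₁ ρ₁) - Real.sqrt (1 - Tr' ρ₂ ρ₂))^2)))^2
      = p₁ * (1-p₁) * (Tr' (ρ₁ - ρ₂) (ρ₁ - ρ₂)
      + (Real.sqrt (1 - Tr' ρ₁ ρ₁) - Real.sqrt (1 - Tr' ρ₂ ρ₂))^2) :=
    Real.sq_sqrt (mul_nonneg hpp hE0)
  have hd2 : (Real.sqrt (p₁ * (1-p₁) * (Tr' (σ₁ - σ₂) (σ₁ - σ₂)
      + (Real.sqrt (1 - Tr' σ₁ σ₁) - Real.sqrt (1 - Tr' σ₂ σ₂))^2)))^2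
      = p₁ * (1-p₁) * (Tr' (σ₁ - σ₂) (σ₁ - σ₂)
      + (Real.sqrt (1 - Tr' σ₁ σ₁) - Real.sqrt (1 - Tr' σ₂ σ₂))^2) :=
    Real.sq_sqrt (mul_nonneg hpp hF0)
  have hmix := Tr'_expand p₁ (1-p₁) p₁ (1-p₁) ρ₁ ρ₂ σ₁ σ₂
  have hρbar := Tr'_expand p₁ (1-p₁) p₁ (1-p₁) ρ₁ ρ₂ ρ₁ ρ₂
  have hσbar := Tr'_expand p₁ (1-p₁) p₁ (1-p₁) σ₁ σ₂ σ₁ σ₂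
  have hΔρexp := Tr'_sub_sub ρ₁ ρ₂ ρ₁ ρ₂
  have hΔσexp := Tr'_sub_sub σ₁ σ₂ σ₁ σ₂
  have hΔmix := Tr'_sub_sub ρ₁ ρ₂ σ₁ σ₂
  have hρ21 : Tr' ρ₂ ρ₁ = Tr' ρ₁ ρ₂ := Tr'_comm ρ₂ ρ₁
  have hσ21 : Tr' σ₂ σ₁ = Tr' σ₁ σ₂ := Tr'_comm σ₂ σ₁
  have hR : 1 - Tr' ((p₁:ℂ) • ρ₁ + ((1-p₁:ℝ):ℂ) • ρ₂) ((p₁:ℂ) • ρ₁ + ((1-p₁:ℝ):ℂ) • ρ₂)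
      = (p₁ * Real.sqrt (1 - Tr' ρ₁ ρ₁) + (1-p₁) * Real.sqrt (1 - Tr' ρ₂ ρ₂))^2
      + (Real.sqrt (p₁ * (1-p₁) * (Tr' (ρ₁ - ρ₂) (ρ₁ - ρ₂)
        + (Real.sqrt (1 - Tr' ρ₁ ρ₁) - Real.sqrt (1 - Tr' ρ₂ ρ₂))^2)))^2 := by
    rw [hρbar, hc2, hΔρexp, hρ21]
    linear_combination (-p₁) * hx₁ + (p₁ - 1) * hx₂
  have hS : 1 - Tr' ((p₁:ℂ) • σ₁ + ((1-p₁:ℝ):ℂ) • σ₂) ((p₁:ℂ) • σ₁ + ((1-p₁:ℝ):ℂ) • σ₂)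
      = (p₁ * Real.sqrt (1 - Tr' σ₁ σ₁) + (1-p₁) * Real.sqrt (1 - Tr' σ₂ σ₂))^2
      + (Real.sqrt (p₁ * (1-p₁) * (Tr' (σ₁ - σ₂) (σ₁ - σ₂)
        + (Real.sqrt (1 - Tr' σ₁ σ₁) - Real.sqrt (1 - Tr' σ₂ σ₂))^2)))^2 := by
    rw [hσbar, hd2, hΔσexp, hσ21]
    linear_combination (-p₁) * hy₁ + (p₁ - 1) * hy₂
  have hcs := cs_main' hΔρ hΔσ (Real.sqrt (1 - Tr' ρ₁ ρ₁) - Real.sqrt (1 - Tr' ρ₂ ρ₂))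
    (Real.sqrt (1 - Tr' σ₁ σ₁) - Real.sqrt (1 - Tr' σ₂ σ₂))
  have hcdval : Real.sqrt (p₁ * (1-p₁) * (Tr' (ρ₁ - ρ₂) (ρ₁ - ρ₂)
        + (Real.sqrt (1 - Tr' ρ₁ ρ₁) - Real.sqrt (1 - Tr' ρ₂ ρ₂))^2))
      * Real.sqrt (p₁ * (1-p₁) * (Tr' (σ₁ - σ₂) (σ₁ - σ₂)
        + (Real.sqrt (1 - Tr' σ₁ σ₁) - Real.sqrt (1 - Tr' σ₂ σ₂))^2))
      = p₁ * (1-p₁) * (Real.sqrt (Tr' (ρ₁ - ρ₂) (ρ₁ - ρ₂)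
        + (Real.sqrt (1 - Tr' ρ₁ ρ₁) - Real.sqrt (1 - Tr' ρ₂ ρ₂))^2)
        * Real.sqrt (Tr' (σ₁ - σ₂) (σ₁ - σ₂)
        + (Real.sqrt (1 - Tr' σ₁ σ₁) - Real.sqrt (1 - Tr' σ₂ σ₂))^2)) := by
    rw [Real.sqrt_mul hpp, Real.sqrt_mul hpp]
    rw [show ∀ u v w : ℝ, u * v * (u * w) = (u * u) * (v * w) from fun u v w => by ring]
    rw [Real.mul_self_sqrt hpp]
  calc p₁ * FN ρ₁ σ₁ + (1-p₁) * FN ρ₂ σ₂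
      = Tr' ((p₁:ℂ) • ρ₁ + ((1-p₁:ℝ):ℂ) • ρ₂) ((p₁:ℂ) • σ₁ + ((1-p₁:ℝ):ℂ) • σ₂)
        + (p₁ * Real.sqrt (1 - Tr' ρ₁ ρ₁) + (1-p₁) * Real.sqrt (1 - Tr' ρ₂ ρ₂))
          * (p₁ * Real.sqrt (1 - Tr' σ₁ σ₁) + (1-p₁) * Real.sqrt (1 - Tr' σ₂ σ₂))
        + p₁ * (1-p₁) * (Tr' (ρ₁ - ρ₂) (σ₁ - σ₂)
          + (Real.sqrt (1 - Tr' ρ₁ ρ₁) - Real.sqrt (1 - Tr' ρ₂ ρ₂))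
            * (Real.sqrt (1 - Tr' σ₁ σ₁) - Real.sqrt (1 - Tr' σ₂ σ₂))) := by
        rw [hFN, hFN, hmix, hΔmix]; ring
    _ ≤ Tr' ((p₁:ℂ) • ρ₁ + ((1-p₁:ℝ):ℂ) • ρ₂) ((p₁:ℂ) • σ₁ + ((1-p₁:ℝ):ℂ) • σ₂)
        + (p₁ * Real.sqrt (1 - Tr' ρ₁ ρ₁) + (1-p₁) * Real.sqrt (1 - Tr' ρ₂ ρ₂))
          * (p₁ * Real.sqrt (1 - Tr' σ₁ σ₁) + (1-p₁) * Real.sqrt (1 - Tr' σ₂ σ₂))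
        + p₁ * (1-p₁) * (Real.sqrt (Tr' (ρ₁ - ρ₂) (ρ₁ - ρ₂)
          + (Real.sqrt (1 - Tr' ρ₁ ρ₁) - Real.sqrt (1 - Tr' ρ₂ ρ₂))^2)
          * Real.sqrt (Tr' (σ₁ - σ₂) (σ₁ - σ₂)
          + (Real.sqrt (1 - Tr' σ₁ σ₁) - Real.sqrt (1 - Tr' σ₂ σ₂))^2)) := by
        have := mul_le_mul_of_nonneg_left hcs hpp
        linarith
    _ = Tr' ((p₁:ℂ) • ρ₁ + ((1-p₁:ℝ):ℂ) • ρ₂) ((p₁:ℂ) • σ₁ + ((1-p₁:ℝ):ℂ) • σ₂)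
        + ((p₁ * Real.sqrt (1 - Tr' ρ₁ ρ₁) + (1-p₁) * Real.sqrt (1 - Tr' ρ₂ ρ₂))
          * (p₁ * Real.sqrt (1 - Tr' σ₁ σ₁) + (1-p₁) * Real.sqrt (1 - Tr' σ₂ σ₂))
        + Real.sqrt (p₁ * (1-p₁) * (Tr' (ρ₁ - ρ₂) (ρ₁ - ρ₂)
          + (Real.sqrt (1 - Tr' ρ₁ ρ₁) - Real.sqrt (1 - Tr' ρ₂ ρ₂))^2))
          * Real.sqrt (p₁ * (1-p₁) * (Tr' (σ₁ - σ₂) (σ₁ - σ₂)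
          + (Real.sqrt (1 - Tr' σ₁ σ₁) - Real.sqrt (1 - Tr' σ₂ σ₂))^2))) := by
        rw [hcdval]; ring
    _ ≤ Tr' ((p₁:ℂ) • ρ₁ + ((1-p₁:ℝ):ℂ) • ρ₂) ((p₁:ℂ) • σ₁ + ((1-p₁:ℝ):ℂ) • σ₂)
        + Real.sqrt ((p₁ * Real.sqrt (1 - Tr' ρ₁ ρ₁) + (1-p₁) * Real.sqrt (1 - Tr' ρ₂ ρ₂))^2
          + (Real.sqrt (p₁ * (1-p₁) * (Tr' (ρ₁ - ρ₂) (ρ₁ - ρ₂)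
            + (Real.sqrt (1 - Tr' ρ₁ ρ₁) - Real.sqrt (1 - Tr' ρ₂ ρ₂))^2)))^2)
        * Real.sqrt ((p₁ * Real.sqrt (1 - Tr' σ₁ σ₁) + (1-p₁) * Real.sqrt (1 - Tr' σ₂ σ₂))^2
          + (Real.sqrt (p₁ * (1-p₁) * (Tr' (σ₁ - σ₂) (σ₁ - σ₂)
            + (Real.sqrt (1 - Tr' σ₁ σ₁) - Real.sqrt (1 - Tr' σ₂ σ₂))^2)))^2) :=
        add_le_add_right (two_dim_cs' ha0 hb0 (Real.sqrt_nonneg _) (Real.sqrt_nonneg _)) _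
    _ = FN ((p₁:ℂ) • ρ₁ + ((1-p₁:ℝ):ℂ) • ρ₂) ((p₁:ℂ) • σ₁ + ((1-p₁:ℝ):ℂ) • σ₂) := by
        rw [hFN, hR, hS]
end

section
/- F_N is super-multiplicative under tensor products: for density matrices ρ₁, ρ₂, σ₁, σ₂, F_N(ρ₁⊗ρ₂, σ₁⊗σ₂) ≥ F_N(ρ₁,σ₁)·F_N(ρ₂,σ₂). -/
open Matrix BigOperators ComplexOrder

section aux

variable {n : Type*} [Fintype n]

/-- trace of square of a Hermitian matrix is the sum of squared norms of entries. -/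
lemma trace_sq_eq {ρ : Matrix n n ℂ} (h : ρ.IsHermitian) :
    (ρ * ρ).trace = ((∑ j, ∑ i, ‖ρ j i‖ ^ 2 : ℝ) : ℂ) := by
  rw [Matrix.trace]
  push_cast
  refine Finset.sum_congr rfl fun j _ => ?_
  rw [Matrix.diag_apply, Matrix.mul_apply]
  refine Finset.sum_congr rfl fun i _ => ?_
  rw [← h.apply i j, Complex.star_def, Complex.mul_conj]
  norm_cast
  rw [Complex.normSq_eq_norm_sq]

lemma trace_sq_re_nonneg {ρ : Matrix n n ℂ} (h : ρ.IsHermitian) :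
    0 ≤ (ρ * ρ).trace.re := by
  rw [trace_sq_eq h]
  simp only [Complex.ofReal_re]
  positivity

lemma trace_mul_im_eq_zero {ρ σ : Matrix n n ℂ} (hρ : ρ.IsHermitian) (hσ : σ.IsHermitian) :
    (ρ * σ).trace.im = 0 := by
  have : star ((ρ * σ).trace) = (ρ * σ).trace := by
    rw [← Matrix.trace_conjTranspose, Matrix.conjTranspose_mul, hρ.eq, hσ.eq,
      Matrix.trace_mul_comm]
  have := congrArg Complex.im this
  simp only [Complex.star_def, Complex.conj_im] at this
  linarith

/-- Cauchy–Schwarz for the Frobenius inner product of Hermitian matrices. -/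
lemma trace_mul_le {ρ σ : Matrix n n ℂ} (hρ : ρ.IsHermitian) (hσ : σ.IsHermitian) :
    (ρ * σ).trace.re ≤
      Real.sqrt ((ρ * ρ).trace.re) * Real.sqrt ((σ * σ).trace.re) := by
  classical
  set X : EuclideanSpace ℂ (n × n) := WithLp.toLp 2 (fun p : n × n => ρ p.1 p.2) with hX
  set Y : EuclideanSpace ℂ (n × n) := WithLp.toLp 2 (fun p : n × n => σ p.1 p.2) with hY
  have h1 : (ρ * σ).trace = inner ℂ X Y := by
    rw [Matrix.trace, PiLp.inner_apply]
    rw [Fintype.sum_prod_type]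
    simp only [hX, hY, RCLike.inner_apply]
    rw [Finset.sum_comm]
    refine Finset.sum_congr rfl fun j _ => ?_
    rw [Matrix.diag_apply, Matrix.mul_apply]
    refine Finset.sum_congr rfl fun i _ => ?_
    rw [← hρ.apply i j, Complex.star_def, Complex.conj_conj, mul_comm]
  have h2 : ‖X‖ = Real.sqrt ((ρ * ρ).trace.re) := by
    rw [EuclideanSpace.norm_eq]
    congr 1
    rw [trace_sq_eq hρ, Complex.ofReal_re, Fintype.sum_prod_type]
  have h3 : ‖Y‖ = Real.sqrt ((σ * σ).trace.re) := by
    rw [EuclideanSpace.norm_eq]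
    congr 1
    rw [trace_sq_eq hσ, Complex.ofReal_re, Fintype.sum_prod_type]
  rw [h1, ← h2, ← h3]
  exact re_inner_le_norm (𝕜 := ℂ) X Y

end aux

lemma trace_sq_le_one {n : Type*} [Fintype n] [DecidableEq n] {ρ : Matrix n n ℂ}
    (h : IsDensity ρ) : (ρ * ρ).trace.re ≤ 1 := by
  have hH : ρ.IsHermitian := h.1.1
  set U : Matrix n n ℂ := (hH.eigenvectorUnitary : Matrix n n ℂ) with hU
  have hUU : star U * U = 1 := Matrix.mem_unitaryGroup_iff'.mp hH.eigenvectorUnitary.2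
  set D : Matrix n n ℂ := Matrix.diagonal (RCLike.ofReal ∘ hH.eigenvalues) with hD
  have hsp : ρ = U * D * star U := hH.spectral_theorem
  have hsq : (ρ * ρ).trace = (D * D).trace := by
    rw [hsp]
    rw [show U * D * star U * (U * D * star U) = U * (D * ((star U * U) * (D * star U))) by
      simp only [Matrix.mul_assoc]]
    rw [hUU, one_mul, Matrix.trace_mul_comm]
    simp only [Matrix.mul_assoc, hUU, Matrix.mul_one]
  have htr : ρ.trace = D.trace := by
    rw [hsp, Matrix.trace_mul_comm, ← Matrix.mul_assoc, hUU, one_mul]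
  have hDtr : D.trace = ((∑ i, hH.eigenvalues i : ℝ) : ℂ) := by
    rw [hD, Matrix.trace_diagonal]; push_cast; rfl
  have hDsq : (D * D).trace = ((∑ i, (hH.eigenvalues i) ^ 2 : ℝ) : ℂ) := by
    rw [hD, Matrix.diagonal_mul_diagonal, Matrix.trace_diagonal]
    push_cast; simp [sq]
  have hsum1 : ∑ i, hH.eigenvalues i = 1 := by
    have := h.2
    rw [htr, hDtr] at this
    exact_mod_cast this
  have hnn : ∀ i ∈ Finset.univ, 0 ≤ hH.eigenvalues i := fun i _ => h.1.eigenvalues_nonneg i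
  calc (ρ * ρ).trace.re = ∑ i, (hH.eigenvalues i) ^ 2 := by rw [hsq, hDsq, Complex.ofReal_re]
    _ ≤ (∑ i, hH.eigenvalues i) ^ 2 := Finset.sum_sq_le_sq_sum_of_nonneg hnn
    _ = 1 := by rw [hsum1]; norm_num

lemma cs3 {u1 u2 u3 v1 v2 v3 A B : ℝ} (hS : 0 ≤ u1 * v1 + u2 * v2 + u3 * v3)
    (hA : 0 ≤ A) (hB : 0 ≤ B)
    (hA2 : A ^ 2 = u1 ^ 2 + u2 ^ 2 + u3 ^ 2) (hB2 : B ^ 2 = v1 ^ 2 + v2 ^ 2 + v3 ^ 2) :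
    u1 * v1 + u2 * v2 + u3 * v3 ≤ A * B := by
  have hid : (u1 ^ 2 + u2 ^ 2 + u3 ^ 2) * (v1 ^ 2 + v2 ^ 2 + v3 ^ 2) -
      (u1 * v1 + u2 * v2 + u3 * v3) ^ 2 =
      (u1 * v2 - u2 * v1) ^ 2 + (u1 * v3 - u3 * v1) ^ 2 + (u2 * v3 - u3 * v2) ^ 2 := by
    ring
  have h2 : (u1 * v1 + u2 * v2 + u3 * v3) ^ 2 ≤ (A * B) ^ 2 := by
    rw [mul_pow, hA2, hB2]
    linarith [sq_nonneg (u1 * v2 - u2 * v1), sq_nonneg (u1 * v3 - u3 * v1),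
      sq_nonneg (u2 * v3 - u3 * v2), hid]
  have := Real.sqrt_le_sqrt h2
  rwa [Real.sqrt_sq hS, Real.sqrt_sq (mul_nonneg hA hB)] at this

lemma key_real {x₁ x₂ y₁ y₂ a b : ℝ}
    (hx₁ : 0 ≤ x₁) (hx₁' : x₁ ≤ 1) (hx₂ : 0 ≤ x₂) (hx₂' : x₂ ≤ 1)
    (hy₁ : 0 ≤ y₁) (hy₁' : y₁ ≤ 1) (hy₂ : 0 ≤ y₂) (hy₂' : y₂ ≤ 1)
    (ha : a ≤ Real.sqrt x₁ * Real.sqrt y₁) (hb : b ≤ Real.sqrt x₂ * Real.sqrt y₂) :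
    (a + Real.sqrt (1 - x₁) * Real.sqrt (1 - y₁)) *
      (b + Real.sqrt (1 - x₂) * Real.sqrt (1 - y₂)) ≤
      a * b + Real.sqrt (1 - x₁ * x₂) * Real.sqrt (1 - y₁ * y₂) := by
  have h1x₁ : (0:ℝ) ≤ 1 - x₁ := by linarith
  have h1x₂ : (0:ℝ) ≤ 1 - x₂ := by linarith
  have h1y₁ : (0:ℝ) ≤ 1 - y₁ := by linarith
  have h1y₂ : (0:ℝ) ≤ 1 - y₂ := by linarith
  have h1xx : (0:ℝ) ≤ 1 - x₁ * x₂ := sub_nonneg.mpr (mul_le_one₀ hx₁' hx₂ hx₂')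
  have h1yy : (0:ℝ) ≤ 1 - y₁ * y₂ := sub_nonneg.mpr (mul_le_one₀ hy₁' hy₂ hy₂')
  have hST := cs3 (u1 := Real.sqrt x₁ * Real.sqrt (1 - x₂))
    (u2 := Real.sqrt x₂ * Real.sqrt (1 - x₁))
    (u3 := Real.sqrt (1 - x₁) * Real.sqrt (1 - x₂))
    (v1 := Real.sqrt y₁ * Real.sqrt (1 - y₂))
    (v2 := Real.sqrt y₂ * Real.sqrt (1 - y₁))
    (v3 := Real.sqrt (1 - y₁) * Real.sqrt (1 - y₂))
    (A := Real.sqrt (1 - x₁ * x₂)) (B := Real.sqrt (1 - y₁ * y₂))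
    (by positivity) (Real.sqrt_nonneg _) (Real.sqrt_nonneg _)
    (by rw [Real.sq_sqrt h1xx, mul_pow, mul_pow, mul_pow,
          Real.sq_sqrt hx₁, Real.sq_sqrt hx₂, Real.sq_sqrt h1x₁, Real.sq_sqrt h1x₂]; ring)
    (by rw [Real.sq_sqrt h1yy, mul_pow, mul_pow, mul_pow,
          Real.sq_sqrt hy₁, Real.sq_sqrt hy₂, Real.sq_sqrt h1y₁, Real.sq_sqrt h1y₂]; ring)
  have hq : (0:ℝ) ≤ Real.sqrt (1 - x₂) * Real.sqrt (1 - y₂) := by positivity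
  have hp : (0:ℝ) ≤ Real.sqrt (1 - x₁) * Real.sqrt (1 - y₁) := by positivity
  have step1 : a * (Real.sqrt (1 - x₂) * Real.sqrt (1 - y₂)) ≤
      (Real.sqrt x₁ * Real.sqrt (1 - x₂)) * (Real.sqrt y₁ * Real.sqrt (1 - y₂)) := by
    calc a * (Real.sqrt (1 - x₂) * Real.sqrt (1 - y₂)) ≤
        (Real.sqrt x₁ * Real.sqrt y₁) * (Real.sqrt (1 - x₂) * Real.sqrt (1 - y₂)) :=
          mul_le_mul_of_nonneg_right ha hq
      _ = (Real.sqrt x₁ * Real.sqrt (1 - x₂)) * (Real.sqrt y₁ * Real.sqrt (1 - y₂)) := by ring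
  have step2 : (Real.sqrt (1 - x₁) * Real.sqrt (1 - y₁)) * b ≤
      (Real.sqrt x₂ * Real.sqrt (1 - x₁)) * (Real.sqrt y₂ * Real.sqrt (1 - y₁)) := by
    calc (Real.sqrt (1 - x₁) * Real.sqrt (1 - y₁)) * b ≤
        (Real.sqrt (1 - x₁) * Real.sqrt (1 - y₁)) * (Real.sqrt x₂ * Real.sqrt y₂) :=
          mul_le_mul_of_nonneg_left hb hp
      _ = (Real.sqrt x₂ * Real.sqrt (1 - x₁)) * (Real.sqrt y₂ * Real.sqrt (1 - y₁)) := by ring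
  have step3 : (Real.sqrt (1 - x₁) * Real.sqrt (1 - y₁)) *
      (Real.sqrt (1 - x₂) * Real.sqrt (1 - y₂)) =
      (Real.sqrt (1 - x₁) * Real.sqrt (1 - x₂)) *
      (Real.sqrt (1 - y₁) * Real.sqrt (1 - y₂)) := by ring
  nlinarith [hST, step1, step2, step3]

open Kronecker in
theorem stmt_2 {n m : Type*} [Fintype n] [Fintype m] [DecidableEq n] [DecidableEq m]
    (ρ₁ σ₁ : Matrix n n ℂ) (ρ₂ σ₂ : Matrix m m ℂ)
    (hρ₁ : IsDensity ρ₁) (hσ₁ : IsDensity σ₁)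
    (hρ₂ : IsDensity ρ₂) (hσ₂ : IsDensity σ₂) :
    FN ρ₁ σ₁ * FN ρ₂ σ₂ ≤ FN (ρ₁ ⊗ₖ ρ₂) (σ₁ ⊗ₖ σ₂) := by
  have Hρ₁ : ρ₁.IsHermitian := hρ₁.1.1
  have Hσ₁ : σ₁.IsHermitian := hσ₁.1.1
  have Hρ₂ : ρ₂.IsHermitian := hρ₂.1.1
  have Hσ₂ : σ₂.IsHermitian := hσ₂.1.1
  have kmul : ∀ (A C : Matrix n n ℂ) (B D : Matrix m m ℂ),
      ((A ⊗ₖ B) * (C ⊗ₖ D)).trace = (A * C).trace * (B * D).trace := by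
    intro A C B D
    rw [← Matrix.mul_kronecker_mul, Matrix.trace_kronecker]
  have hre : ∀ (A C : Matrix n n ℂ) (B D : Matrix m m ℂ), A.IsHermitian → C.IsHermitian →
      B.IsHermitian → D.IsHermitian →
      ((A ⊗ₖ B) * (C ⊗ₖ D)).trace.re = (A * C).trace.re * (B * D).trace.re := by
    intro A C B D hA hC hB hD
    rw [kmul, Complex.mul_re, trace_mul_im_eq_zero hA hC, trace_mul_im_eq_zero hB hD,
      mul_zero, sub_zero]
  simp only [FN]
  rw [hre ρ₁ σ₁ ρ₂ σ₂ Hρ₁ Hσ₁ Hρ₂ Hσ₂, hre ρ₁ ρ₁ ρ₂ ρ₂ Hρ₁ Hρ₁ Hρ₂ Hρ₂,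
    hre σ₁ σ₁ σ₂ σ₂ Hσ₁ Hσ₁ Hσ₂ Hσ₂]
  exact key_real (trace_sq_re_nonneg Hρ₁) (trace_sq_le_one hρ₁)
    (trace_sq_re_nonneg Hρ₂) (trace_sq_le_one hρ₂)
    (trace_sq_re_nonneg Hσ₁) (trace_sq_le_one hσ₁)
    (trace_sq_re_nonneg Hσ₂) (trace_sq_le_one hσ₂)
    (trace_mul_le Hρ₁ Hσ₁) (trace_mul_le Hρ₂ Hσ₂)
end

section
/- For real numbers a, b, c, d with 0 ≤ a,b,c,d ≤ 1, the inequality √((1−ab)(1−cd)) ≥ √((1−a)(1−b)(1−c)(1−d)) + √(ac(1−b)(1−d)) + √(bd(1−a)(1−c)) holds. -/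
lemma cs2 (x1 x2 y1 y2 : ℝ) (hx1 : 0 ≤ x1) (hx2 : 0 ≤ x2) (hy1 : 0 ≤ y1)
    (hy2 : 0 ≤ y2) :
    Real.sqrt (x1 * y1) + Real.sqrt (x2 * y2) ≤ Real.sqrt ((x1 + x2) * (y1 + y2)) := by
  have h1 : Real.sqrt (x1 * y1) = Real.sqrt x1 * Real.sqrt y1 := Real.sqrt_mul hx1 _
  have h2 : Real.sqrt (x2 * y2) = Real.sqrt x2 * Real.sqrt y2 := Real.sqrt_mul hx2 _
  rw [h1, h2, Real.le_sqrt (by positivity)]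
  nlinarith [sq_nonneg (Real.sqrt x1 * Real.sqrt y2 - Real.sqrt x2 * Real.sqrt y1),
    Real.sq_sqrt hx1, Real.sq_sqrt hx2, Real.sq_sqrt hy1, Real.sq_sqrt hy2,
    Real.sqrt_nonneg x1, Real.sqrt_nonneg x2, Real.sqrt_nonneg y1, Real.sqrt_nonneg y2]
  exact mul_nonneg (by linarith) (by linarith)

theorem stmt_3 (a b c d : ℝ)
    (ha : 0 ≤ a) (ha' : a ≤ 1) (hb : 0 ≤ b) (hb' : b ≤ 1)
    (hc : 0 ≤ c) (hc' : c ≤ 1) (hd : 0 ≤ d) (hd' : d ≤ 1) :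
    Real.sqrt ((1 - a * b) * (1 - c * d)) ≥
      Real.sqrt ((1 - a) * (1 - b) * (1 - c) * (1 - d))
        + Real.sqrt (a * c * (1 - b) * (1 - d))
        + Real.sqrt (b * d * (1 - a) * (1 - c)) := by
  have e1 : (1 - a * b) = ((1 - a) * (1 - b) + a * (1 - b)) + b * (1 - a) := by ring
  have e2 : (1 - c * d) = ((1 - c) * (1 - d) + c * (1 - d)) + d * (1 - c) := by ring
  have ea : (0:ℝ) ≤ 1 - a := by linarith
  have eb : (0:ℝ) ≤ 1 - b := by linarith
  have ec : (0:ℝ) ≤ 1 - c := by linarith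
  have ed : (0:ℝ) ≤ 1 - d := by linarith
  rw [ge_iff_le, e1, e2]
  calc Real.sqrt ((1 - a) * (1 - b) * (1 - c) * (1 - d))
        + Real.sqrt (a * c * (1 - b) * (1 - d))
        + Real.sqrt (b * d * (1 - a) * (1 - c))
      = (Real.sqrt ((1 - a) * (1 - b) * ((1 - c) * (1 - d)))
        + Real.sqrt (a * (1 - b) * (c * (1 - d))))
        + Real.sqrt (b * (1 - a) * (d * (1 - c))) := by ring_nf
    _ ≤ Real.sqrt (((1 - a) * (1 - b) + a * (1 - b)) * ((1 - c) * (1 - d) + c * (1 - d)))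
        + Real.sqrt (b * (1 - a) * (d * (1 - c))) := by
        gcongr ?_ + _
        exact cs2 _ _ _ _ (mul_nonneg ea eb) (mul_nonneg ha eb) (mul_nonneg ec ed)
          (mul_nonneg hc ed)
    _ ≤ Real.sqrt ((((1 - a) * (1 - b) + a * (1 - b)) + b * (1 - a))
        * (((1 - c) * (1 - d) + c * (1 - d)) + d * (1 - c))) :=
        cs2 _ _ _ _ (add_nonneg (mul_nonneg ea eb) (mul_nonneg ha eb))
          (mul_nonneg hb ea) (add_nonneg (mul_nonneg ec ed) (mul_nonneg hc ed))
          (mul_nonneg hd ec)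
end

section
/- The function C[F_N](ρ,σ) := √(1 − F_N(ρ,σ)) is a metric on the set of density matrices: it is nonnegative, vanishes exactly when ρ = σ, is symmetric, and satisfies the triangle inequality. -/
open Matrix BigOperators ComplexOrder

/-- The candidate metric `C[F_N](ρ,σ) = √(1 − F_N(ρ,σ))`. -/
noncomputable def CFN {n : Type*} [Fintype n] (ρ σ : Matrix n n ℂ) : ℝ :=
  Real.sqrt (1 - FN ρ σ)

/-! ### Auxiliary lemmas -/

lemma aux_trace_sq_eq {n : Type*} [Fintype n] [DecidableEq n] {ρ : Matrix n n ℂ}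
    (h : ρ.IsHermitian) :
    (ρ * ρ).trace = ∑ i, ((h.eigenvalues i : ℂ) * (h.eigenvalues i : ℂ)) := by
  set U : Matrix n n ℂ := (h.eigenvectorUnitary : Matrix n n ℂ)
  set D : Matrix n n ℂ := diagonal ((↑) ∘ h.eigenvalues)
  have hU : star U * U = 1 := (Matrix.mem_unitaryGroup_iff').mp h.eigenvectorUnitary.2
  have hspec : ρ = U * D * star U := h.spectral_theorem
  have : ρ * ρ = U * (D * D) * star U := by
    rw [hspec]; rw [Matrix.mul_assoc (U*D) (star U) (U * D * star U)]
    rw [← Matrix.mul_assoc (star U) (U*D) (star U), ← Matrix.mul_assoc (star U) U D, hU]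
    noncomm_ring
  rw [this, Matrix.trace_mul_cycle, ← Matrix.mul_assoc, hU, Matrix.one_mul]
  simp [D, diagonal_mul_diagonal, trace_diagonal]

lemma aux_trace_eq {n : Type*} [Fintype n] [DecidableEq n] {ρ : Matrix n n ℂ}
    (h : ρ.IsHermitian) :
    ρ.trace = ∑ i, (h.eigenvalues i : ℂ) := by
  set U : Matrix n n ℂ := (h.eigenvectorUnitary : Matrix n n ℂ)
  set D : Matrix n n ℂ := diagonal ((↑) ∘ h.eigenvalues)
  have hU : star U * U = 1 := (Matrix.mem_unitaryGroup_iff').mp h.eigenvectorUnitary.2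
  have hspec : ρ = U * D * star U := h.spectral_theorem
  conv_lhs => rw [hspec]
  rw [Matrix.trace_mul_cycle, hU, Matrix.one_mul]
  simp [D, trace_diagonal]

/-- For a density matrix, `tr ρ² ≤ 1`. -/
lemma aux_trace_sq_le_one {n : Type*} [Fintype n] [DecidableEq n] {ρ : Matrix n n ℂ}
    (hρ : IsDensity ρ) : (ρ * ρ).trace.re ≤ 1 := by
  obtain ⟨hpsd, htr⟩ := hρ
  have h := hpsd.1
  have hsum : ∑ i, h.eigenvalues i = 1 := by
    have := congrArg Complex.re (aux_trace_eq h)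
    simpa [htr, Complex.re_sum] using this.symm
  have hnn : ∀ i, 0 ≤ h.eigenvalues i := hpsd.eigenvalues_nonneg
  have hsq : (ρ * ρ).trace.re = ∑ i, h.eigenvalues i * h.eigenvalues i := by
    have := congrArg Complex.re (aux_trace_sq_eq h)
    simpa [Complex.re_sum] using this
  rw [hsq]
  calc ∑ i, h.eigenvalues i * h.eigenvalues i
      ≤ ∑ i, h.eigenvalues i * 1 := by
        refine Finset.sum_le_sum fun i _ => ?_
        have hle : h.eigenvalues i ≤ 1 := by
          rw [← hsum]
          exact Finset.single_le_sum (fun j _ => hnn j) (Finset.mem_univ i)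
        exact mul_le_mul_of_nonneg_left hle (hnn i)
    _ = 1 := by simpa using hsum

/-- The embedding of matrices into a real Euclidean space. -/
noncomputable def auxV {n : Type*} [Fintype n] (ρ : Matrix n n ℂ) :
    EuclideanSpace ℝ ((n × n) ⊕ (n × n) ⊕ Unit) := WithLp.toLp 2 fun x =>
  match x with
  | Sum.inl (i, j) => (ρ i j).re
  | Sum.inr (Sum.inl (i, j)) => (ρ i j).im
  | Sum.inr (Sum.inr _) => Real.sqrt (1 - (ρ * ρ).trace.re)

lemma aux_inner_eq {n : Type*} [Fintype n] (ρ σ : Matrix n n ℂ)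
    (hσ : σ.IsHermitian) :
    inner ℝ (auxV ρ) (auxV σ) = FN ρ σ := by
  have htr : (ρ * σ).trace.re
      = ∑ p : n × n, ((ρ p.1 p.2).re * (σ p.1 p.2).re + (ρ p.1 p.2).im * (σ p.1 p.2).im) := by
    have h1 : (ρ * σ).trace = ∑ i, ∑ j, ρ i j * σ j i := by
      simp [Matrix.trace, Matrix.diag, Matrix.mul_apply]
    rw [h1]
    simp only [Complex.re_sum, ← Finset.sum_product']
    refine Finset.sum_congr rfl fun p _ => ?_
    simp only [← hσ.apply p.2 p.1, Complex.mul_re, Complex.star_def, Complex.conj_re,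
      Complex.conj_im]
    ring
  simp only [PiLp.inner_apply, RCLike.inner_apply, starRingEnd_apply, star_trivial,
    Fintype.sum_sum_type]
  rw [FN, htr]
  simp [auxV, Fintype.sum_prod_type]
  simp only [Finset.sum_add_distrib]
  simp only [mul_comm (σ _ _).re, mul_comm (σ _ _).im]
  ring


lemma aux_inner_self {n : Type*} [Fintype n] [DecidableEq n] {ρ : Matrix n n ℂ}
    (hρ : IsDensity ρ) : (inner ℝ (auxV ρ) (auxV ρ) : ℝ) = 1 := by
  rw [aux_inner_eq ρ ρ hρ.1.1, FN,
    Real.mul_self_sqrt (by linarith [aux_trace_sq_le_one hρ])]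
  ring

lemma aux_norm_eq {n : Type*} [Fintype n] [DecidableEq n] {ρ : Matrix n n ℂ}
    (hρ : IsDensity ρ) : ‖auxV ρ‖ = 1 := by
  have h := aux_inner_self hρ
  rw [real_inner_self_eq_norm_sq] at h
  nlinarith [norm_nonneg (auxV ρ)]

lemma aux_CFN_eq {n : Type*} [Fintype n] [DecidableEq n] (ρ σ : Matrix n n ℂ)
    (hρ : IsDensity ρ) (hσ : IsDensity σ) :
    CFN ρ σ = ‖auxV ρ - auxV σ‖ / Real.sqrt 2 := by
  have hd : ‖auxV ρ - auxV σ‖ ^ 2 = 2 - 2 * FN ρ σ := by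
    rw [norm_sub_sq_real, aux_norm_eq hρ, aux_norm_eq hσ, aux_inner_eq ρ σ hσ.1.1]
    ring
  have h1 : 1 - FN ρ σ = ‖auxV ρ - auxV σ‖ ^ 2 / 2 := by rw [hd]; ring
  rw [CFN, h1, Real.sqrt_div' _ (by positivity), Real.sqrt_sq (norm_nonneg _)]

lemma aux_injective {n : Type*} [Fintype n] {ρ σ : Matrix n n ℂ}
    (h : auxV ρ = auxV σ) : ρ = σ := by
  ext i j
  have hre := congrArg (fun v => v (Sum.inl (i, j))) h
  have him := congrArg (fun v => v (Sum.inr (Sum.inl (i, j)))) h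
  exact Complex.ext hre him

theorem stmt_5 {n : Type*} [Fintype n] [DecidableEq n] :
    (∀ ρ σ : Matrix n n ℂ, IsDensity ρ → IsDensity σ → 0 ≤ CFN ρ σ) ∧
    (∀ ρ σ : Matrix n n ℂ, IsDensity ρ → IsDensity σ → (CFN ρ σ = 0 ↔ ρ = σ)) ∧
    (∀ ρ σ : Matrix n n ℂ, IsDensity ρ → IsDensity σ → CFN ρ σ = CFN σ ρ) ∧
    (∀ ρ σ τ : Matrix n n ℂ, IsDensity ρ → IsDensity σ → IsDensity τ →
      CFN ρ τ ≤ CFN ρ σ + CFN σ τ) := by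
  have h2 : (0:ℝ) < Real.sqrt 2 := Real.sqrt_pos.mpr (by norm_num)
  refine ⟨fun ρ σ _ _ => Real.sqrt_nonneg _, fun ρ σ hρ hσ => ?_, fun ρ σ hρ hσ => ?_,
    fun ρ σ τ hρ hσ hτ => ?_⟩
  · rw [aux_CFN_eq ρ σ hρ hσ, div_eq_zero_iff]
    constructor
    · rintro (h | h)
      · exact aux_injective (sub_eq_zero.mp (norm_eq_zero.mp h))
      · exact absurd h (ne_of_gt h2)
    · rintro rfl
      left; simp
  · rw [aux_CFN_eq ρ σ hρ hσ, aux_CFN_eq σ ρ hσ hρ, norm_sub_rev]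
  · rw [aux_CFN_eq ρ τ hρ hτ, aux_CFN_eq ρ σ hρ hσ, aux_CFN_eq σ τ hσ hτ, ← add_div]
    exact div_le_div_of_nonneg_right (c := Real.sqrt 2) (norm_sub_le_norm_sub_add_norm_sub _ _ _) h2.le
end

section
/- Negative-type inequality for C²[F_N]: for any density matrices ρ₁,…,ρₙ and real numbers c₁,…,cₙ with Σᵢ cᵢ = 0, one has Σᵢⱼ (1 − F_N(ρᵢ,ρⱼ)) cᵢcⱼ = −tr[(Σᵢ cᵢρᵢ)²] − (Σᵢ cᵢ√(1 − tr ρᵢ²))² ≤ 0. -/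
open Matrix BigOperators ComplexOrder

theorem stmt_6 {n : Type*} [Fintype n] [DecidableEq n] (N : ℕ)
    (ρ : Fin N → Matrix n n ℂ) (hρ : ∀ i, IsDensity (ρ i))
    (c : Fin N → ℝ) (hc : ∑ i, c i = 0) :
    (∑ i, ∑ j, (1 - FN (ρ i) (ρ j)) * c i * c j
        = -(((∑ i, (c i : ℂ) • ρ i) * (∑ i, (c i : ℂ) • ρ i)).trace.re)
          - (∑ i, c i * Real.sqrt (1 - (ρ i * ρ i).trace.re)) ^ 2)
    ∧ ∑ i, ∑ j, (1 - FN (ρ i) (ρ j)) * c i * c j ≤ 0 := by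
  set s : Fin N → ℝ := fun i => Real.sqrt (1 - (ρ i * ρ i).trace.re) with hs
  set A : Matrix n n ℂ := ∑ i, (c i : ℂ) • ρ i with hA
  have hT : (A * A).trace.re = ∑ i, ∑ j, (ρ i * ρ j).trace.re * c i * c j := by
    rw [hA, Finset.sum_mul_sum]
    rw [Matrix.trace_sum]
    rw [Complex.re_sum]
    refine Finset.sum_congr rfl fun i _ => ?_
    rw [Matrix.trace_sum, Complex.re_sum]
    refine Finset.sum_congr rfl fun j _ => ?_
    rw [Matrix.smul_mul, Matrix.mul_smul, smul_smul, Matrix.trace_smul, smul_eq_mul,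
      ← Complex.ofReal_mul, Complex.re_ofReal_mul]
    ring
  have hexp : ∀ i j : Fin N, (1 - FN (ρ i) (ρ j)) * c i * c j
      = c i * c j - (ρ i * ρ j).trace.re * c i * c j - (c i * s i) * (c j * s j) := by
    intro i j; simp only [FN, hs]; ring
  have hmain : ∑ i, ∑ j, (1 - FN (ρ i) (ρ j)) * c i * c j
      = -(A * A).trace.re - (∑ i, c i * s i) ^ 2 := by
    have h1 : ∑ i : Fin N, ∑ j : Fin N, c i * c j = 0 := by
      rw [← Finset.sum_mul_sum, hc, mul_zero]
    have h2 : ∑ i : Fin N, ∑ j : Fin N, (c i * s i) * (c j * s j)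
        = (∑ i, c i * s i) ^ 2 := by
      rw [← Finset.sum_mul_sum, sq]
    simp only [hexp, Finset.sum_sub_distrib]
    rw [h1, h2, hT]
    ring
  refine ⟨hmain, ?_⟩
  rw [hmain]
  have hAH : Aᴴ = A := by
    rw [hA, conjTranspose_sum]
    refine Finset.sum_congr rfl fun i _ => ?_
    rw [conjTranspose_smul, (hρ i).1.1]
    simp
  have hpos : 0 ≤ (A * A).trace.re := by
    have : (A * A).trace.re = ∑ j, ∑ i, Complex.normSq (A i j) := by
      have hAA : A * A = Aᴴ * A := by rw [hAH]
      rw [hAA, Matrix.trace, Complex.re_sum]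
      refine Finset.sum_congr rfl fun j _ => ?_
      rw [Matrix.diag_apply, Matrix.mul_apply, Complex.re_sum]
      refine Finset.sum_congr rfl fun i _ => ?_
      rw [Matrix.conjTranspose_apply]
      simp [Complex.normSq_apply, Complex.mul_re]
    rw [this]
    exact Finset.sum_nonneg fun j _ => Finset.sum_nonneg fun i _ => Complex.normSq_nonneg _
  nlinarith [sq_nonneg (∑ i, c i * s i)]
end

section
/- Upper bound of the trace distance by F_N: for density matrices ρ and σ, D(ρ,σ) := ½‖ρ−σ‖_tr satisfies D(ρ,σ) ≤ √(r/2) · √(1 − F_N(ρ,σ)), where r = rank(ρ − σ). -/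
open Matrix BigOperators ComplexOrder

/-- The trace norm `‖A‖_tr = tr √(A†A)`, the sum of the singular values of `A`. -/
noncomputable def traceNorm {n : Type*} [Fintype n] [DecidableEq n]
    (A : Matrix n n ℂ) : ℝ :=
  (((Matrix.posSemidef_conjTranspose_mul_self A).1.eigenvectorUnitary : Matrix n n ℂ) *
      diagonal (((↑) : ℝ → ℂ) ∘ Real.sqrt ∘ (Matrix.posSemidef_conjTranspose_mul_self A).1.eigenvalues) *
      (star ((Matrix.posSemidef_conjTranspose_mul_self A).1.eigenvectorUnitary : Matrix n n ℂ))).trace.re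

section aux

variable {n : Type*} [Fintype n] [DecidableEq n]

lemma aux_trace_conj {U D : Matrix n n ℂ} (hU : star U * U = 1) :
    (U * D * star U).trace = D.trace := by
  rw [Matrix.trace_mul_comm, ← mul_assoc, hU, one_mul]

lemma aux_conj_mul_conj {U D E : Matrix n n ℂ} (hU : star U * U = 1) :
    (U * D * star U) * (U * E * star U) = U * (D * E) * star U := by
  have h2 : ∀ X : Matrix n n ℂ, star U * (U * X) = X := fun X => by
    rw [← mul_assoc, hU, one_mul]
  simp only [mul_assoc, h2]

lemma aux_mul_self {A : Matrix n n ℂ} (hA : A.IsHermitian) :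
    A * A = (hA.eigenvectorUnitary : Matrix n n ℂ) *
      diagonal (fun i => ((hA.eigenvalues i : ℂ)) ^ 2) *
      star (hA.eigenvectorUnitary : Matrix n n ℂ) := by
  have hU : star (hA.eigenvectorUnitary : Matrix n n ℂ) *
      (hA.eigenvectorUnitary : Matrix n n ℂ) = 1 :=
    Matrix.mem_unitaryGroup_iff'.mp hA.eigenvectorUnitary.2
  conv_lhs => rw [hA.spectral_theorem, Unitary.conjStarAlgAut_apply, aux_conj_mul_conj hU]
  rw [diagonal_mul_diagonal]
  congr 1
  ext i
  simp [sq]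

lemma aux_trace_sq {A : Matrix n n ℂ} (hA : A.IsHermitian) :
    (A * A).trace.re = ∑ i, (hA.eigenvalues i) ^ 2 := by
  have hU : star (hA.eigenvectorUnitary : Matrix n n ℂ) *
      (hA.eigenvectorUnitary : Matrix n n ℂ) = 1 :=
    Matrix.mem_unitaryGroup_iff'.mp hA.eigenvectorUnitary.2
  rw [aux_mul_self hA, aux_trace_conj hU, trace_diagonal, Complex.re_sum]
  refine Finset.sum_congr rfl fun i _ => ?_
  simp [← Complex.ofReal_pow]

lemma aux_trace_re {A : Matrix n n ℂ} (hA : A.IsHermitian) :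
    A.trace.re = ∑ i, hA.eigenvalues i := by
  have hU : star (hA.eigenvectorUnitary : Matrix n n ℂ) *
      (hA.eigenvectorUnitary : Matrix n n ℂ) = 1 :=
    Matrix.mem_unitaryGroup_iff'.mp hA.eigenvectorUnitary.2
  conv_lhs => rw [hA.spectral_theorem, Unitary.conjStarAlgAut_apply]
  rw [aux_trace_conj hU, trace_diagonal, Complex.re_sum]
  simp

lemma aux_traceNorm_eq {A : Matrix n n ℂ} (hA : A.IsHermitian) :
    traceNorm A = ∑ i, |hA.eigenvalues i| := by
  have hU : star (hA.eigenvectorUnitary : Matrix n n ℂ) *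
      (hA.eigenvectorUnitary : Matrix n n ℂ) = 1 :=
    Matrix.mem_unitaryGroup_iff'.mp hA.eigenvectorUnitary.2
  have hC := (Matrix.posSemidef_conjTranspose_mul_self A).1
  have h1 : traceNorm A = (cfc Real.sqrt (Aᴴ * A)).trace.re := by
    rw [Matrix.IsHermitian.cfc_eq hC]
    rfl
  have hsa : IsSelfAdjoint A := hA
  have hsq : Aᴴ * A = cfc (fun x : ℝ => x ^ 2) A := by
    rw [cfc_pow_id A 2 hsa, hA.eq, sq]
  have h2 : cfc Real.sqrt (Aᴴ * A) = cfc (fun x : ℝ => |x|) A := by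
    rw [hsq, ← cfc_comp Real.sqrt (fun x : ℝ => x ^ 2) A hsa]
    congr 1
    funext x
    simp [Real.sqrt_sq_eq_abs]
  rw [h1, h2, Matrix.IsHermitian.cfc_eq hA, Matrix.IsHermitian.cfc, Unitary.conjStarAlgAut_apply,
    aux_trace_conj hU, trace_diagonal, Complex.re_sum]
  simp

lemma aux_purity {ρ : Matrix n n ℂ} (hρ : IsDensity ρ) : (ρ * ρ).trace.re ≤ 1 := by
  have hH := hρ.1.1
  rw [aux_trace_sq hH]
  have h1 : ∑ i, hH.eigenvalues i = 1 := by
    rw [← aux_trace_re hH, hρ.2]; simp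
  calc ∑ i, hH.eigenvalues i ^ 2 ≤ (∑ i, hH.eigenvalues i) ^ 2 :=
        Finset.sum_sq_le_sq_sum_of_nonneg fun i _ => hρ.1.eigenvalues_nonneg i
    _ = 1 := by rw [h1]; norm_num

end aux

theorem stmt_9 {n : Type*} [Fintype n] [DecidableEq n]
    (ρ σ : Matrix n n ℂ) (hρ : IsDensity ρ) (hσ : IsDensity σ) :
    (1 / 2) * traceNorm (ρ - σ) ≤
      Real.sqrt (((ρ - σ).rank : ℝ) / 2) * Real.sqrt (1 - FN ρ σ) := by
  set A := ρ - σ with hAdef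
  have hA : A.IsHermitian := hρ.1.1.sub hσ.1.1
  set lam := hA.eigenvalues with hlam
  -- trace norm as sum of |eigenvalues|
  have hT : traceNorm A = ∑ i, |lam i| := aux_traceNorm_eq hA
  -- HS norm squared
  have hS : (A * A).trace.re = ∑ i, lam i ^ 2 := aux_trace_sq hA
  -- expansion of tr(A²)
  have hexp : (A * A).trace.re
      = (ρ * ρ).trace.re + (σ * σ).trace.re - 2 * (ρ * σ).trace.re := by
    have : A * A = ρ * ρ - ρ * σ - σ * ρ + σ * σ := by
      rw [hAdef]; noncomm_ring
    rw [this, trace_add, trace_sub, trace_sub, trace_mul_comm σ ρ]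
    simp [Complex.add_re, Complex.sub_re]
    ring
  -- Cauchy-Schwarz: (∑|λ|)² ≤ r * ∑λ²
  have hrank : (A.rank : ℝ) = ((Finset.univ.filter fun i => lam i ≠ 0).card : ℝ) := by
    rw [hA.rank_eq_card_non_zero_eigs]
    norm_cast
    simp [Fintype.card_subtype, hlam]
  have hCS : (∑ i, |lam i|) ^ 2 ≤ (A.rank : ℝ) * ∑ i, lam i ^ 2 := by
    have h1 : ∑ i, |lam i| = ∑ i ∈ Finset.univ.filter fun i => lam i ≠ 0, |lam i| := by
      rw [Finset.sum_filter_of_ne]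
      intro i _ h
      simpa using h
    have h2 := sq_sum_le_card_mul_sum_sq
      (s := Finset.univ.filter fun i => lam i ≠ 0) (f := fun i => |lam i|)
    have h3 : ∑ i ∈ Finset.univ.filter fun i => lam i ≠ 0, |lam i| ^ 2
        ≤ ∑ i, lam i ^ 2 := by
      have : ∀ i ∈ Finset.univ.filter fun i => lam i ≠ 0, |lam i| ^ 2 = lam i ^ 2 :=
        fun i _ => sq_abs _
      rw [Finset.sum_congr rfl this]
      exact Finset.sum_le_sum_of_subset_of_nonneg (Finset.subset_univ _)
        (fun i _ _ => sq_nonneg _)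
    rw [h1, hrank]
    calc (∑ i ∈ Finset.univ.filter fun i => lam i ≠ 0, |lam i|) ^ 2
        ≤ ((Finset.univ.filter fun i => lam i ≠ 0).card : ℝ)
          * ∑ i ∈ Finset.univ.filter fun i => lam i ≠ 0, |lam i| ^ 2 := by
          exact_mod_cast h2
      _ ≤ _ := by
          apply mul_le_mul_of_nonneg_left h3 (by positivity)
  -- ∑λ² ≤ 2(1 - FN)
  have ha := aux_purity hρ
  have hb := aux_purity hσ
  have hkey : ∑ i, lam i ^ 2 ≤ 2 * (1 - FN ρ σ) := by
    rw [← hS, hexp, FN]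
    have h1 : (0:ℝ) ≤ 1 - (ρ * ρ).trace.re := by linarith
    have h2 : (0:ℝ) ≤ 1 - (σ * σ).trace.re := by linarith
    nlinarith [Real.sq_sqrt h1, Real.sq_sqrt h2,
      sq_nonneg (Real.sqrt (1 - (ρ * ρ).trace.re) - Real.sqrt (1 - (σ * σ).trace.re)),
      Real.sqrt_nonneg (1 - (ρ * ρ).trace.re), Real.sqrt_nonneg (1 - (σ * σ).trace.re)]
  -- assemble
  have hTnn : 0 ≤ ∑ i, |lam i| := Finset.sum_nonneg fun i _ => abs_nonneg _
  have hFnn : 0 ≤ 1 - FN ρ σ := by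
    nlinarith [Finset.sum_nonneg (s := Finset.univ) (f := fun i => lam i ^ 2)
      (fun i _ => sq_nonneg (lam i))]
  have hrnn : (0:ℝ) ≤ (A.rank : ℝ) := Nat.cast_nonneg _
  rw [hT, ← Real.sqrt_mul (by positivity) (1 - FN ρ σ)]
  rw [show (1:ℝ)/2 * (∑ i, |lam i|) = (∑ i, |lam i|) / 2 by ring]
  rw [← Real.sqrt_sq (by positivity : (0:ℝ) ≤ (∑ i, |lam i|) / 2)]
  apply Real.sqrt_le_sqrt
  have h4 := mul_le_mul_of_nonneg_left hkey hrnn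
  nlinarith [hCS]
end

section
/- Bloch vector difference dominates the cross product: if r₁ and r₂ are vectors in ℝ³ with ‖r₁‖ ≤ 1, ‖r₂‖ ≤ 1 and r₁ ≠ r₂, then ‖r₁ − r₂‖² > ‖r₁ × r₂‖². -/
theorem stmt_18 (r₁ r₂ : EuclideanSpace ℝ (Fin 3))
    (h₁ : ‖r₁‖ ≤ 1) (h₂ : ‖r₂‖ ≤ 1) (hne : r₁ ≠ r₂) :
    ‖r₁ - r₂‖ ^ 2 >
      ‖((WithLp.equiv 2 (Fin 3 → ℝ)).symm
          (crossProduct (WithLp.equiv 2 (Fin 3 → ℝ) r₁)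
            (WithLp.equiv 2 (Fin 3 → ℝ) r₂)))‖ ^ 2 := by
  set a := ‖r₁‖ ^ 2 with ha
  set b := ‖r₂‖ ^ 2 with hb
  set t := (inner ℝ r₁ r₂ : ℝ) with ht
  have hnsq : ∀ z : EuclideanSpace ℝ (Fin 3), ‖z‖ ^ 2 = z 0 ^ 2 + z 1 ^ 2 + z 2 ^ 2 := by
    intro z
    rw [EuclideanSpace.norm_eq, Real.sq_sqrt (by positivity)]
    simp [Fin.sum_univ_three, sq]
  have hinner : t = r₁ 0 * r₂ 0 + r₁ 1 * r₂ 1 + r₁ 2 * r₂ 2 := by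
    rw [ht]
    simp [PiLp.inner_apply, Fin.sum_univ_three, RCLike.inner_apply, conj_trivial]
    ring
  have hcross : ‖((WithLp.equiv 2 (Fin 3 → ℝ)).symm
          (crossProduct (WithLp.equiv 2 (Fin 3 → ℝ) r₁)
            (WithLp.equiv 2 (Fin 3 → ℝ) r₂)))‖ ^ 2 = a * b - t ^ 2 := by
    rw [hnsq, ha, hb, hinner, hnsq, hnsq]
    simp [crossProduct, WithLp.equiv_apply, WithLp.equiv_symm_apply, Matrix.cons_val_zero, Matrix.cons_val_one, Matrix.head_cons, Matrix.cons_val_two, Matrix.tail_cons]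
    ring
  have hdiff : ‖r₁ - r₂‖ ^ 2 = a + b - 2 * t := by
    rw [ha, hb, ht]
    rw [← real_inner_self_eq_norm_sq, ← real_inner_self_eq_norm_sq, ← real_inner_self_eq_norm_sq]
    rw [inner_sub_sub_self, real_inner_comm r₂ r₁]
    ring
  have hd : ‖r₁ - r₂‖ ^ 2 > 0 := by
    exact pow_pos (norm_pos_iff.mpr (sub_ne_zero_of_ne hne)) 2
  rw [hcross, hdiff] at *
  have ha1 : a ≤ 1 := by rw [ha]; nlinarith [norm_nonneg r₁]
  have hb1 : b ≤ 1 := by rw [hb]; nlinarith [norm_nonneg r₂]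
  nlinarith [sq_nonneg (a - b), mul_pos hd hd, mul_nonneg (le_of_lt hd) (sub_nonneg.2 ha1), mul_nonneg (le_of_lt hd) (sub_nonneg.2 hb1)]
end
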